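/- Let 1 ≤ i ≤ j ≤ r, and for each i ≤ t ≤ j let k_t be an integer with 1 ≤ k_t ≤ t + 1; let π_{k_t} denote the cycle with ambient index t. If, for some 1 ≤ l ≤ r, π_{k_j}(α_l) is a positive root that is not a simple root, then π_{k_i} π_{k_{i+1}} ⋯ π_{k_j}(α_l) is a positive root. -/

import Mathlib

open Equiv Finset

/-- The simple reflection `s i = (i, i+1)` (1-based) in `S_{r+1}`, for `1 ≤ i ≤ r`;
the junk value `1` otherwise. -/
def sr (r i : ℕ) : Equiv.Perm (Fin (r + 1)) :=
  if h : 1 ≤ i ∧ i ≤ r then Equiv.swap ⟨i - 1, by omega⟩ ⟨i, by omega⟩ else 1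

/-- The cycle `π_k` with ambient index `i`, i.e. `s_i s_{i-1} ⋯ s_k`
(the identity when `k = i + 1`). -/
def cyc (r i k : ℕ) : Equiv.Perm (Fin (r + 1)) :=
  ((List.range (i + 1 - k)).map fun t => sr r (i - t)).prod

/-- The product `π_{k i} π_{k (i+1)} ⋯ π_{k j}`, the factor `π_{k t}` being the
cycle with ambient index `t`. -/
def cycProd (r : ℕ) (k : ℕ → ℕ) (i j : ℕ) : Equiv.Perm (Fin (r + 1)) :=
  ((List.range' i (j + 1 - i)).map fun t => cyc r t (k t)).prod

/-- Coxeter length of a permutation: the number of inversions. -/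
def lenInv {n : ℕ} (w : Equiv.Perm (Fin n)) : ℕ :=
  (Finset.univ.filter fun p : Fin n × Fin n => p.1 < p.2 ∧ w p.2 < w p.1).card

/-- Partial sums of a (1-based) composition: `psum c j = c 1 + ⋯ + c j`. -/
def psum (c : ℕ → ℕ) (j : ℕ) : ℕ := ∑ i ∈ Finset.Icc 1 j, c i

/-- The transpose partition of `(t 1, …, t b)`: `transp b t j = #{i ∈ [1,b] : t i ≥ j}`. -/
def transp (b : ℕ) (t : ℕ → ℕ) (j : ℕ) : ℕ :=
  ((Finset.Icc 1 b).filter fun i => j ≤ t i).card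

/-- The element of `Fin (r+1)` with value `i` (for `i ≤ r`). -/
def finOf (r i : ℕ) : Fin (r + 1) := ⟨min i r, by omega⟩

/-- `w(α_i)` is a positive root, where `α_i = e_i − e_{i+1}` (1-based), i.e. the
0-based pair `(i-1, i)`; `w(e_c − e_d) = e_{w c} − e_{w d}` is positive iff `w c < w d`. -/
def posRoot (r : ℕ) (w : Equiv.Perm (Fin (r + 1))) (i : ℕ) : Prop :=
  (w (finOf r (i - 1)) : ℕ) < w (finOf r i)

/-- `w(α_i)` is a negative root. -/
def negRoot (r : ℕ) (w : Equiv.Perm (Fin (r + 1))) (i : ℕ) : Prop :=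
  (w (finOf r i) : ℕ) < w (finOf r (i - 1))

/-- `w(α_i)` is a simple root. -/
def simpleRoot (r : ℕ) (w : Equiv.Perm (Fin (r + 1))) (i : ℕ) : Prop :=
  (w (finOf r i) : ℕ) = (w (finOf r (i - 1)) : ℕ) + 1

/-- `w(α_i) = α_j` (as roots: the image pair is `(j-1, j)` in 0-based indices). -/
def eqRoot (r : ℕ) (w : Equiv.Perm (Fin (r + 1))) (i j : ℕ) : Prop :=
  (w (finOf r (i - 1)) : ℕ) = j - 1 ∧ (w (finOf r i) : ℕ) = j

/-- `Π_l Π_{l+1} ⋯ Π_a` for the composition `c` and tuple `k`, where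
`Π_j = π_{k_{x_{j-1}}} ⋯ π_{k_{x_j - 1}}` and `x_j = psum c j`. -/
def tailProd (r a : ℕ) (c k : ℕ → ℕ) (l : ℕ) : Equiv.Perm (Fin (r + 1)) :=
  ((List.range' l (a + 1 - l)).map fun j => cycProd r k (psum c (j - 1)) (psum c j - 1)).prod

/-- The subgroup `W(P)`: generated by the simple reflections `s i` with `i ∈ [1,r]`
avoiding the partial sums `x 1, …, x (a-1)` of the composition `c`. -/
def WP (r a : ℕ) (c : ℕ → ℕ) : Subgroup (Equiv.Perm (Fin (r + 1))) :=
  Subgroup.closure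
    {g | ∃ i, 1 ≤ i ∧ i ≤ r ∧ (∀ j, 1 ≤ j → j ≤ a - 1 → i ≠ psum c j) ∧ g = sr r i}

/-- `α_i ∈ Δ_λ` for the composition `λ = (p 1, …, p m)` of `r+1`. -/
def inDelta (r m : ℕ) (p : ℕ → ℕ) (i : ℕ) : Prop :=
  1 ≤ i ∧ i ≤ r ∧ ∀ j, 1 ≤ j → j ≤ m - 1 → i ≠ psum p j

/-- The left coset `H · g`. -/
def cosetOf {G : Type*} [Group G] (H : Subgroup G) (g : G) : Set G :=
  {x | ∃ h ∈ H, x = h * g}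

/-- The (0-based) positions `u` and `v` lie in the same block of the composition
`μ^⊤ = transp b t`; a negative root `e_c − e_d` lies in `Φ⁻_{μ^⊤}` iff its two
indices lie in the same block. -/
def sameBlock (b : ℕ) (t : ℕ → ℕ) (u v : ℕ) : Prop :=
  ∃ j, 1 ≤ j ∧ j ≤ t 1 ∧
    psum (transp b t) (j - 1) ≤ u ∧ u < psum (transp b t) j ∧
    psum (transp b t) (j - 1) ≤ v ∧ v < psum (transp b t) j

lemma sr_apply_eq (r i : ℕ) (h1 : 1 ≤ i) (h2 : i ≤ r) :
    sr r i = Equiv.swap ⟨i - 1, by omega⟩ ⟨i, by omega⟩ := by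
  simp [sr, h1, h2]

lemma cyc_top (r t κ : ℕ) (h : t < κ) : cyc r t κ = 1 := by
  have h0 : t + 1 - κ = 0 := by omega
  simp [cyc, h0]

lemma cyc_succ (r t κ : ℕ) (h : κ ≤ t) : cyc r t κ = cyc r t (κ + 1) * sr r κ := by
  have h1 : t + 1 - κ = (t - κ) + 1 := by omega
  have h2 : t + 1 - (κ + 1) = t - κ := by omega
  have h3 : t - (t - κ) = κ := by omega
  rw [cyc, cyc, h1, h2, List.range_succ, List.map_append, List.prod_append]
  simp [h3]

lemma cyc_apply (n : ℕ) : ∀ r t κ, t ≤ r → 1 ≤ κ → t + 1 - κ = n →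
    ∀ v : Fin (r + 1), ((cyc r t κ) v : ℕ) =
      if (v : ℕ) + 1 = κ ∧ κ ≤ t then t
      else if κ ≤ (v : ℕ) ∧ (v : ℕ) ≤ t then (v : ℕ) - 1 else v := by
  induction n with
  | zero =>
    intro r t κ ht hκ hn v
    rw [cyc_top r t κ (by omega), Equiv.Perm.one_apply]
    split_ifs with h1 h2 <;> omega
  | succ n ih =>
    intro r t κ ht hκ hn v
    have hκt : κ ≤ t := by omega
    rw [cyc_succ r t κ hκt, Equiv.Perm.mul_apply]
    set w := sr r κ v with hw
    have hval : (w : ℕ) = if (v : ℕ) + 1 = κ then κ else if (v : ℕ) = κ then κ - 1 else v := by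
      rw [hw, sr_apply_eq r κ hκ (by omega)]
      by_cases h1 : (v : ℕ) + 1 = κ
      · have hv : v = ⟨κ - 1, by omega⟩ := Fin.ext (by simp; omega)
        rw [hv, Equiv.swap_apply_left]
        have h2 : κ - 1 + 1 = κ := by omega
        simp [h1, h2]
      · by_cases h2 : (v : ℕ) = κ
        · have hv : v = ⟨κ, by omega⟩ := Fin.ext (by simp [h2])
          rw [hv, Equiv.swap_apply_right]
          simp [h1, h2]
        · rw [Equiv.swap_apply_of_ne_of_ne (by simp [Fin.ext_iff]; omega)
            (by simp [Fin.ext_iff]; omega)]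
          simp [h1, h2]
    rw [ih r t (κ + 1) ht (by omega) (by omega) w, hval]
    split_ifs <;> omega

lemma prod_fix {N : ℕ} (L : List (Equiv.Perm (Fin N))) (v : Fin N)
    (h : ∀ g ∈ L, g v = v) : L.prod v = v := by
  induction L with
  | nil => simp
  | cons g L ih =>
    rw [List.prod_cons, Equiv.Perm.mul_apply,
      ih (fun g hg => h g (List.mem_cons_of_mem _ hg)), h g List.mem_cons_self]

lemma sr_fix (r m : ℕ) (v : Fin (r + 1)) (hv : m < (v : ℕ)) : sr r m v = v := by
  unfold sr
  split_ifs with h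
  · exact Equiv.swap_apply_of_ne_of_ne (by simp [Fin.ext_iff]; omega)
      (by simp [Fin.ext_iff]; omega)
  · rfl

lemma cyc_fix (r t κ : ℕ) (v : Fin (r + 1)) (hv : t < (v : ℕ)) : cyc r t κ v = v := by
  apply prod_fix
  intro g hg
  obtain ⟨s, _, rfl⟩ := List.mem_map.1 hg
  exact sr_fix r (t - s) v (by omega)

lemma cycProd_fix (r : ℕ) (k : ℕ → ℕ) (i j : ℕ) (v : Fin (r + 1)) (hv : j < (v : ℕ)) :
    cycProd r k i j v = v := by
  apply prod_fix
  intro g hg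
  obtain ⟨t, ht, rfl⟩ := List.mem_map.1 hg
  have := List.mem_range'_1.1 ht
  exact cyc_fix r t _ v (by omega)

lemma cycProd_le (r : ℕ) (k : ℕ → ℕ) (i j : ℕ) (v : Fin (r + 1)) (hv : (v : ℕ) ≤ j) :
    ((cycProd r k i j) v : ℕ) ≤ j := by
  by_contra h
  push_neg at h
  have h2 := cycProd_fix r k i j _ h
  have h3 := (cycProd r k i j).injective h2
  have h4 : ((cycProd r k i j) v : ℕ) = (v : ℕ) := congrArg Fin.val h3
  omega

lemma cycProd_split (r : ℕ) (k : ℕ → ℕ) (i j : ℕ) (hi : 1 ≤ i) (hij : i ≤ j) :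
    cycProd r k i j = cycProd r k i (j - 1) * cyc r j (k j) := by
  unfold cycProd
  have h1 : j + 1 - i = (j - i) + 1 := by omega
  have h2 : j - 1 + 1 - i = j - i := by omega
  have h3 : i + 1 * (j - i) = j := by omega
  rw [h1, h2, List.range'_concat, List.map_append, List.prod_append, h3]
  simp

/-- if `π_{k_j}(α_l)` is a positive root that is not simple, then
`π_{k_i} π_{k_{i+1}} ⋯ π_{k_j}(α_l)` is a positive root. -/
theorem stmt10 (r i j l : ℕ) (hi : 1 ≤ i) (hij : i ≤ j) (hjr : j ≤ r)
    (hl1 : 1 ≤ l) (hlr : l ≤ r) (k : ℕ → ℕ)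
    (hk : ∀ t, i ≤ t → t ≤ j → 1 ≤ k t ∧ k t ≤ t + 1)
    (hpos : posRoot r (cyc r j (k j)) l)
    (hns : ¬ simpleRoot r (cyc r j (k j)) l) :
    posRoot r (cycProd r k i j) l := by
  obtain ⟨hk1, hk2⟩ := hk j hij le_rfl
  have hfl : (finOf r l : ℕ) = l := by simp [finOf]; omega
  have hfl1 : (finOf r (l - 1) : ℕ) = l - 1 := by simp [finOf]; omega
  have ha := cyc_apply (j + 1 - k j) r j (k j) hjr hk1 rfl (finOf r (l - 1))
  have hb := cyc_apply (j + 1 - k j) r j (k j) hjr hk1 rfl (finOf r l)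
  rw [hfl1] at ha
  rw [hfl] at hb
  simp only [posRoot, simpleRoot] at hpos hns ⊢
  have key : ((cyc r j (k j)) (finOf r (l - 1)) : ℕ) ≤ j - 1 ∧
      j ≤ ((cyc r j (k j)) (finOf r l) : ℕ) := by
    split_ifs at ha hb <;> omega
  rw [cycProd_split r k i j hi hij]
  simp only [Equiv.Perm.mul_apply]
  rw [cycProd_fix r k i (j - 1) ((cyc r j (k j)) (finOf r l)) (by omega)]
  have hle := cycProd_le r k i (j - 1) ((cyc r j (k j)) (finOf r (l - 1))) (by omega)
  omega
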